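/- Let p be a real polynomial with heat evolution P(x,t), and let x : ℝ → ℝ be continuous on [t₀,t₁] and differentiable on (t₀,t₁) with ∂P/∂x(x(t),t) = 0 for every t ∈ (t₀,t₁). Then for every t ∈ (t₀,t₁), the function t ↦ P(x(t),t) has derivative equal to (1/2)·∂²P/∂x²(x(t),t). Consequently, if ∂²P/∂x²(x(t),t) ≥ 0 for all t ∈ (t₀,t₁) then P(x(t₁),t₁) ≥ P(x(t₀),t₀), and if ∂²P/∂x²(x(t),t) ≤ 0 for all t ∈ (t₀,t₁) then P(x(t₁),t₁) ≤ P(x(t₀),t₀). -/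

import Mathlib

/-- The heat evolution of a real polynomial `p`:
`P(x,t) = Σ_{k≥0} (t^k/(2^k·k!)) · p^{(2k)}(x)` (a finite sum). -/
noncomputable def heatEvo (p : Polynomial ℝ) (x t : ℝ) : ℝ :=
  ∑ k ∈ Finset.range (p.natDegree + 1),
    t ^ k / (2 ^ k * (Nat.factorial k)) * ((Polynomial.derivative^[2 * k] p).eval x)

open Polynomial Finset

lemma heatEvo_hasDerivAt_x (p : Polynomial ℝ) (t y : ℝ) :
    HasDerivAt (fun y : ℝ => heatEvo p y t)
      (∑ k ∈ Finset.range (p.natDegree + 1),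
        t ^ k / (2 ^ k * (Nat.factorial k)) * ((derivative^[2 * k + 1] p).eval y)) y := by
  simp only [heatEvo]
  apply HasDerivAt.fun_sum
  intro k _
  have h := ((derivative^[2 * k] p).hasDerivAt y).const_mul
      (t ^ k / (2 ^ k * (Nat.factorial k) : ℝ))
  simpa [Function.iterate_succ_apply'] using h

lemma heatEvo_deriv_x (p : Polynomial ℝ) (t : ℝ) :
    deriv (fun y : ℝ => heatEvo p y t)
      = fun y : ℝ => ∑ k ∈ Finset.range (p.natDegree + 1),
        t ^ k / (2 ^ k * (Nat.factorial k)) * ((derivative^[2 * k + 1] p).eval y) :=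
  funext fun y => (heatEvo_hasDerivAt_x p t y).deriv

lemma heatEvo_hasDerivAt_xx (p : Polynomial ℝ) (t y : ℝ) :
    HasDerivAt (deriv (fun y : ℝ => heatEvo p y t))
      (∑ k ∈ Finset.range (p.natDegree + 1),
        t ^ k / (2 ^ k * (Nat.factorial k)) * ((derivative^[2 * k + 2] p).eval y)) y := by
  rw [heatEvo_deriv_x]
  apply HasDerivAt.fun_sum
  intro k _
  have h := ((derivative^[2 * k + 1] p).hasDerivAt y).const_mul
      (t ^ k / (2 ^ k * (Nat.factorial k) : ℝ))
  simpa [Function.iterate_succ_apply'] using h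

lemma heatEvo_deriv_xx (p : Polynomial ℝ) (t y : ℝ) :
    deriv (deriv (fun y : ℝ => heatEvo p y t)) y
      = ∑ k ∈ Finset.range (p.natDegree + 1),
        t ^ k / (2 ^ k * (Nat.factorial k)) * ((derivative^[2 * k + 2] p).eval y) :=
  (heatEvo_hasDerivAt_xx p t y).deriv

lemma heatEvo_shift (p : Polynomial ℝ) (t y : ℝ) :
    ∑ k ∈ Finset.range (p.natDegree + 1),
      ((k : ℝ) * t ^ (k - 1)) / (2 ^ k * (Nat.factorial k)) * ((derivative^[2 * k] p).eval y)
    = (1 / 2) * ∑ k ∈ Finset.range (p.natDegree + 1),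
      t ^ k / (2 ^ k * (Nat.factorial k)) * ((derivative^[2 * k + 2] p).eval y) := by
  rw [Finset.sum_range_succ', Finset.sum_range_succ]
  have hz : derivative^[2 * p.natDegree + 2] p = 0 := by
    apply iterate_derivative_eq_zero; omega
  rw [hz]
  simp only [Nat.cast_zero, zero_mul, zero_div, eval_zero, mul_zero, add_zero]
  rw [mul_sum]
  apply Finset.sum_congr rfl
  intro i _
  have h1 : 2 * (i + 1) = 2 * i + 2 := by ring
  rw [h1]
  have hf : (Nat.factorial (i + 1) : ℝ) = (i + 1) * Nat.factorial i := by
    rw [Nat.factorial_succ]; push_cast; ring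
  have hfi : (Nat.factorial i : ℝ) ≠ 0 := Nat.cast_ne_zero.2 (Nat.factorial_ne_zero i)
  have h2 : (2 : ℝ) ^ i ≠ 0 := by positivity
  simp only [Nat.add_sub_cancel]
  rw [hf, pow_succ]
  push_cast
  field_simp

theorem heatEvo_comparison_principle (p : Polynomial ℝ) (x : ℝ → ℝ) (t₀ t₁ : ℝ)
    (hle : t₀ ≤ t₁)
    (hcont : ContinuousOn x (Set.Icc t₀ t₁))
    (hdiff : ∀ t ∈ Set.Ioo t₀ t₁, DifferentiableAt ℝ x t)
    (hcrit : ∀ t ∈ Set.Ioo t₀ t₁, deriv (fun y : ℝ => heatEvo p y t) (x t) = 0) :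
    (∀ t ∈ Set.Ioo t₀ t₁,
      HasDerivAt (fun s : ℝ => heatEvo p (x s) s)
        ((1 / 2) * deriv (deriv (fun y : ℝ => heatEvo p y t)) (x t)) t) ∧
    ((∀ t ∈ Set.Ioo t₀ t₁, 0 ≤ deriv (deriv (fun y : ℝ => heatEvo p y t)) (x t)) →
      heatEvo p (x t₀) t₀ ≤ heatEvo p (x t₁) t₁) ∧
    ((∀ t ∈ Set.Ioo t₀ t₁, deriv (deriv (fun y : ℝ => heatEvo p y t)) (x t) ≤ 0) →
      heatEvo p (x t₁) t₁ ≤ heatEvo p (x t₀) t₀) := by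
  have key : ∀ t ∈ Set.Ioo t₀ t₁,
      HasDerivAt (fun s : ℝ => heatEvo p (x s) s)
        ((1 / 2) * deriv (deriv (fun y : ℝ => heatEvo p y t)) (x t)) t := by
    intro t ht
    have hx : HasDerivAt x (deriv x t) t := (hdiff t ht).hasDerivAt
    have hterm : ∀ k ∈ Finset.range (p.natDegree + 1),
        HasDerivAt (fun s : ℝ =>
            s ^ k / (2 ^ k * (Nat.factorial k)) * ((derivative^[2 * k] p).eval (x s)))
          (((k : ℝ) * t ^ (k - 1)) / (2 ^ k * (Nat.factorial k)) * ((derivative^[2 * k] p).eval (x t))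
            + t ^ k / (2 ^ k * (Nat.factorial k)) *
                (((derivative^[2 * k + 1] p).eval (x t)) * deriv x t)) t := by
      intro k _
      have h1 : HasDerivAt (fun s : ℝ => s ^ k / (2 ^ k * (Nat.factorial k) : ℝ))
          (((k : ℝ) * t ^ (k - 1)) / (2 ^ k * (Nat.factorial k))) t :=
        (hasDerivAt_pow k t).div_const _
      have h2 : HasDerivAt (fun s : ℝ => (derivative^[2 * k] p).eval (x s))
          (((derivative^[2 * k + 1] p).eval (x t)) * deriv x t) t := by
        have := ((derivative^[2 * k] p).hasDerivAt (x t)).comp t hx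
        simpa [Function.iterate_succ_apply', Function.comp_def] using this
      exact h1.mul h2
    have hsum := HasDerivAt.fun_sum hterm
    have hfun : (fun s : ℝ => ∑ k ∈ Finset.range (p.natDegree + 1),
        s ^ k / (2 ^ k * (Nat.factorial k)) * ((derivative^[2 * k] p).eval (x s)))
        = fun s : ℝ => heatEvo p (x s) s := by
      funext s; simp [heatEvo]
    rw [hfun] at hsum
    have hval : (∑ k ∈ Finset.range (p.natDegree + 1),
        (((k : ℝ) * t ^ (k - 1)) / (2 ^ k * (Nat.factorial k)) * ((derivative^[2 * k] p).eval (x t))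
          + t ^ k / (2 ^ k * (Nat.factorial k)) *
              (((derivative^[2 * k + 1] p).eval (x t)) * deriv x t)))
        = (1 / 2) * deriv (deriv (fun y : ℝ => heatEvo p y t)) (x t) := by
      rw [Finset.sum_add_distrib]
      have hc : (∑ k ∈ Finset.range (p.natDegree + 1),
          t ^ k / (2 ^ k * (Nat.factorial k)) *
            (((derivative^[2 * k + 1] p).eval (x t)) * deriv x t))
          = (∑ k ∈ Finset.range (p.natDegree + 1),
          t ^ k / (2 ^ k * (Nat.factorial k)) *
            ((derivative^[2 * k + 1] p).eval (x t))) * deriv x t := by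
        rw [Finset.sum_mul]; apply Finset.sum_congr rfl; intro k _; ring
      have hzero : (∑ k ∈ Finset.range (p.natDegree + 1),
          t ^ k / (2 ^ k * (Nat.factorial k)) *
            ((derivative^[2 * k + 1] p).eval (x t))) = 0 := by
        rw [← (heatEvo_hasDerivAt_x p t (x t)).deriv]
        exact hcrit t ht
      rw [hc, hzero, zero_mul, add_zero, heatEvo_deriv_xx]
      exact heatEvo_shift p t (x t)
    rwa [hval] at hsum
  refine ⟨key, ?_, ?_⟩
  · intro hpos
    have hgc : ContinuousOn (fun s : ℝ => heatEvo p (x s) s) (Set.Icc t₀ t₁) := by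
      simp only [heatEvo]
      apply continuousOn_finset_sum
      intro k _
      exact (((continuous_pow k).continuousOn).div_const _).mul
        ((derivative^[2 * k] p).continuous.comp_continuousOn hcont)
    have hmono := monotoneOn_of_deriv_nonneg (convex_Icc t₀ t₁) hgc
      (by
        rw [interior_Icc]
        intro s hs
        exact (key s hs).differentiableAt.differentiableWithinAt)
      (by
        rw [interior_Icc]
        intro s hs
        rw [(key s hs).deriv]
        have := hpos s hs
        positivity)
    exact hmono (Set.left_mem_Icc.2 hle) (Set.right_mem_Icc.2 hle) hle
  · intro hneg
    have hgc : ContinuousOn (fun s : ℝ => heatEvo p (x s) s) (Set.Icc t₀ t₁) := by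
      simp only [heatEvo]
      apply continuousOn_finset_sum
      intro k _
      exact (((continuous_pow k).continuousOn).div_const _).mul
        ((derivative^[2 * k] p).continuous.comp_continuousOn hcont)
    have hanti := antitoneOn_of_deriv_nonpos (convex_Icc t₀ t₁) hgc
      (by
        rw [interior_Icc]
        intro s hs
        exact (key s hs).differentiableAt.differentiableWithinAt)
      (by
        rw [interior_Icc]
        intro s hs
        rw [(key s hs).deriv]
        have := hneg s hs
        linarith)
    exact hanti (Set.left_mem_Icc.2 hle) (Set.right_mem_Icc.2 hle) hle
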